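/- arXiv:1907.05436 — 2 statements merged into one kernel-verified Lean document; each statement's English description precedes it below -/
import Mathlib

section
/- Let F : ℤ → ℂ satisfy F(n) = -1/(2|n|) for n ≠ 0 and F(0) = -log 2, and let ω be the forward difference operator (ωF)(n) = F(n+1) - F(n). Then for each j ≥ 0 there exists c_j > 0 such that |ω^j F(n)| ≤ c_j · (max(|n|,1))^{-1-j} for all n ∈ ℤ. -/
/-- The forward difference operator on sequences indexed by `ℤ`. -/
def fwdDiffZ (F : ℤ → ℂ) : ℤ → ℂ := fun n => F (n + 1) - F n

lemma fwdDiffZ_key (s : ℂ) : ∀ (j : ℕ) (F : ℤ → ℂ) (n : ℤ),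
    (∀ m : ℤ, n ≤ m → m ≤ n + j → m ≠ 0 ∧ F m = s / (2 * m)) →
    fwdDiffZ^[j] F n
      = (-1) ^ j * (j.factorial : ℂ) * s / (2 * ∏ i ∈ Finset.range (j + 1), ((n : ℂ) + i)) := by
  intro j
  induction j with
  | zero =>
    intro F n h
    obtain ⟨hn0, hFn⟩ := h n le_rfl (by simp)
    simp [hFn]
  | succ j ih =>
    intro F n h
    have hne : ∀ m : ℤ, n ≤ m → m ≤ n + (j + 1) → (m : ℂ) ≠ 0 := by
      intro m h1 h2
      exact_mod_cast Int.cast_ne_zero.mpr (h m h1 (by push_cast; omega)).1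
    rw [Function.iterate_succ_apply']
    show fwdDiffZ^[j] F (n + 1) - fwdDiffZ^[j] F n = _
    rw [ih F (n + 1) (fun m h1 h2 => h m (by omega) (by push_cast at h2 ⊢; omega)),
        ih F n (fun m h1 h2 => h m h1 (by push_cast at h2 ⊢; omega))]
    set P : ℂ := ∏ i ∈ Finset.range (j + 1), ((n : ℂ) + i) with hP
    set P' : ℂ := ∏ i ∈ Finset.range (j + 1), (((n + 1 : ℤ) : ℂ) + i) with hP'
    have hA : ∏ i ∈ Finset.range (j + 2), ((n : ℂ) + i) = P * ((n : ℂ) + ((j : ℂ) + 1)) := by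
      rw [Finset.prod_range_succ]; push_cast; ring
    have hB : ∏ i ∈ Finset.range (j + 2), ((n : ℂ) + i) = P' * (n : ℂ) := by
      rw [Finset.prod_range_succ']
      congr 1
      · apply Finset.prod_congr rfl; intro i _; push_cast; ring
      · push_cast; ring
    have hPne : P ≠ 0 := by
      rw [hP, Finset.prod_ne_zero_iff]
      intro i hi
      have := hne (n + i) (by omega) (by simp at hi; omega)
      push_cast at this ⊢; exact this
    have hP'ne : P' ≠ 0 := by
      rw [hP', Finset.prod_ne_zero_iff]
      intro i hi
      have := hne (n + 1 + i) (by omega) (by simp at hi; omega)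
      push_cast at this ⊢; exact this
    have hnne : (n : ℂ) ≠ 0 := hne n le_rfl (by omega)
    have hnj : (n : ℂ) + ((j : ℂ) + 1) ≠ 0 := by
      have := hne (n + (j + 1)) (by omega) (by push_cast; omega)
      push_cast at this ⊢
      convert this using 2 <;> ring_nf
    have hrel : P * ((n : ℂ) + ((j : ℂ) + 1)) = P' * (n : ℂ) := by rw [← hA, hB]
    rw [hA, Nat.factorial_succ]
    push_cast
    field_simp
    linear_combination ((-1)^j * (j.factorial : ℂ) * s) * hrel

lemma abs_fact (n : ℤ) (i : ℕ) : ‖(n : ℂ) + i‖ = |(n : ℝ) + i| := by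
  rw [show ((n : ℂ) + i) = (((n : ℝ) + i : ℝ) : ℂ) by push_cast; ring, Complex.norm_real, Real.norm_eq_abs]

theorem difference_decay (F : ℤ → ℂ)
    (hF0 : F 0 = -Real.log 2)
    (hF : ∀ n : ℤ, n ≠ 0 → F n = -(1 / (2 * |(n : ℝ)|))) :
    ∀ j : ℕ, ∃ c : ℝ, 0 < c ∧ ∀ n : ℤ,
      ‖(fwdDiffZ^[j] F) n‖ ≤
        c * (max |(n : ℝ)| 1) ^ (-(1 : ℝ) - (j : ℝ)) := by
  intro j
  set S : ℝ := ∑ n ∈ Finset.Icc (-2 * (j : ℤ)) 0, ‖(fwdDiffZ^[j] F) n‖ with hS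
  have hSnn : 0 ≤ S := Finset.sum_nonneg fun _ _ => norm_nonneg _
  refine ⟨(j.factorial : ℝ) * 2 ^ j + 1 + S * (2 * j + 1) ^ (j + 1), by positivity, fun n => ?_⟩
  set M : ℝ := max |(n : ℝ)| 1 with hM
  have hM1 : (1 : ℝ) ≤ M := le_max_right _ _
  have hM0 : (0 : ℝ) < M := by linarith
  have hrpow : M ^ (-(1 : ℝ) - (j : ℝ)) = (M ^ (j + 1))⁻¹ := by
    rw [show -(1 : ℝ) - (j : ℝ) = -((j + 1 : ℕ) : ℝ) by push_cast; ring,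
        Real.rpow_neg hM0.le, Real.rpow_natCast]
  rw [hrpow, ← div_eq_mul_inv, le_div_iff₀ (by positivity)]
  rcases le_or_gt 1 n with hn | hn
  · -- positive case
    have key := fwdDiffZ_key (-1) j F n (fun m h1 h2 => by
      have hm0 : m ≠ 0 := by omega
      refine ⟨hm0, ?_⟩
      rw [hF m hm0, abs_of_pos (by exact_mod_cast (by omega : (0:ℤ) < m))]
      push_cast
      ring)
    have habs : ‖(fwdDiffZ^[j] F) n‖
        = (j.factorial : ℝ) / (2 * ∏ i ∈ Finset.range (j + 1), |(n : ℝ) + i|) := by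
      rw [key]
      simp [map_div₀, abs_fact]
    have hMn : M = (n : ℝ) := by
      rw [hM, abs_of_pos (by exact_mod_cast hn)]
      exact max_eq_left (by exact_mod_cast hn)
    have hprod : M ^ (j + 1) ≤ ∏ i ∈ Finset.range (j + 1), |(n : ℝ) + i| := by
      calc M ^ (j + 1) = ∏ _i ∈ Finset.range (j + 1), M := by
            rw [Finset.prod_const, Finset.card_range]
        _ ≤ _ := by
            refine Finset.prod_le_prod (fun i _ => hM0.le) (fun i _ => ?_)
            rw [hMn, abs_of_pos (by positivity)]
            have : (0 : ℝ) ≤ i := Nat.cast_nonneg i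
            linarith
    have hQ0 : (0 : ℝ) < ∏ i ∈ Finset.range (j + 1), |(n : ℝ) + i| :=
      lt_of_lt_of_le (by positivity) hprod
    rw [habs]
    calc (j.factorial : ℝ) / (2 * ∏ i ∈ Finset.range (j + 1), |(n : ℝ) + i|) * M ^ (j + 1)
        ≤ (j.factorial : ℝ) / (2 * ∏ i ∈ Finset.range (j + 1), |(n : ℝ) + i|)
            * ∏ i ∈ Finset.range (j + 1), |(n : ℝ) + i| :=
          mul_le_mul_of_nonneg_left hprod (by positivity)
      _ = (j.factorial : ℝ) / 2 := by field_simp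
      _ ≤ (j.factorial : ℝ) * 2 ^ j + 1 + S * (2 * j + 1) ^ (j + 1) := by
          have h1 : (1 : ℝ) ≤ 2 ^ j := one_le_pow₀ (by norm_num)
          have h2 : (1 : ℝ) ≤ (j.factorial : ℝ) := by exact_mod_cast j.factorial_pos
          nlinarith [mul_nonneg hSnn (by positivity : (0:ℝ) ≤ (2 * (j:ℝ) + 1) ^ (j + 1))]
  rcases le_or_gt n (-2 * (j : ℤ) - 1) with hn2 | hn2
  · -- very negative case
    have key := fwdDiffZ_key 1 j F n (fun m h1 h2 => by
      have hmneg : m < 0 := by omega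
      have hm0 : m ≠ 0 := by omega
      refine ⟨hm0, ?_⟩
      rw [hF m hm0, abs_of_neg (by exact_mod_cast hmneg)]
      push_cast
      ring)
    have habs : ‖(fwdDiffZ^[j] F) n‖
        = (j.factorial : ℝ) / (2 * ∏ i ∈ Finset.range (j + 1), |(n : ℝ) + i|) := by
      rw [key]
      simp [map_div₀, abs_fact]
    have hMn : M = -(n : ℝ) := by
      have h1 : (n : ℝ) ≤ -1 := by exact_mod_cast (by omega : n ≤ -1)
      rw [hM, abs_of_neg (by linarith)]
      exact max_eq_left (by linarith)
    have hM2j : 2 * (j : ℝ) + 1 ≤ M := by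
      rw [hMn]
      have : (n : ℝ) ≤ -2 * (j : ℝ) - 1 := by exact_mod_cast hn2
      linarith
    have hprod : (M / 2) ^ (j + 1) ≤ ∏ i ∈ Finset.range (j + 1), |(n : ℝ) + i| := by
      calc (M / 2) ^ (j + 1) = ∏ _i ∈ Finset.range (j + 1), (M / 2) := by
            rw [Finset.prod_const, Finset.card_range]
        _ ≤ _ := by
            refine Finset.prod_le_prod (fun i _ => by positivity) (fun i hi => ?_)
            have hij : (i : ℝ) ≤ (j : ℝ) := by
              exact_mod_cast Nat.le_of_lt_succ (Finset.mem_range.mp hi)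
            rw [abs_of_neg (by rw [show (n:ℝ) = -M by rw [hMn]; ring]; linarith)]
            rw [show (n:ℝ) = -M by rw [hMn]; ring]
            linarith
    have hQ0 : (0 : ℝ) < ∏ i ∈ Finset.range (j + 1), |(n : ℝ) + i| :=
      lt_of_lt_of_le (by positivity) hprod
    rw [habs]
    calc (j.factorial : ℝ) / (2 * ∏ i ∈ Finset.range (j + 1), |(n : ℝ) + i|) * M ^ (j + 1)
        ≤ (j.factorial : ℝ) / (2 * (M / 2) ^ (j + 1)) * M ^ (j + 1) := by
          apply mul_le_mul_of_nonneg_right _ (by positivity)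
          apply div_le_div_of_nonneg_left (by positivity) (by positivity)
          exact mul_le_mul_of_nonneg_left hprod (by norm_num)
      _ = (j.factorial : ℝ) * 2 ^ j := by
          rw [div_pow]
          field_simp
          ring
      _ ≤ (j.factorial : ℝ) * 2 ^ j + 1 + S * (2 * j + 1) ^ (j + 1) := by
          nlinarith [mul_nonneg hSnn (by positivity : (0:ℝ) ≤ (2 * (j:ℝ) + 1) ^ (j + 1))]
  · -- middle case
    have hmem : n ∈ Finset.Icc (-2 * (j : ℤ)) 0 := Finset.mem_Icc.mpr ⟨by omega, by omega⟩
    have hle : ‖(fwdDiffZ^[j] F) n‖ ≤ S :=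
      Finset.single_le_sum (fun m _ => norm_nonneg _) hmem
    have hMle : M ≤ 2 * (j : ℝ) + 1 := by
      apply max_le _ (by have := Nat.cast_nonneg (α := ℝ) j; linarith)
      rw [abs_le]
      constructor
      · have : (-2 * (j:ℤ) : ℝ) ≤ (n : ℝ) := by exact_mod_cast (Finset.mem_Icc.mp hmem).1
        push_cast at this; linarith
      · have : (n : ℝ) ≤ 0 := by exact_mod_cast (Finset.mem_Icc.mp hmem).2
        linarith
    calc ‖(fwdDiffZ^[j] F) n‖ * M ^ (j + 1)
        ≤ S * (2 * (j : ℝ) + 1) ^ (j + 1) :=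
          mul_le_mul hle (pow_le_pow_left₀ hM0.le hMle _) (by positivity) hSnn
      _ ≤ (j.factorial : ℝ) * 2 ^ j + 1 + S * (2 * j + 1) ^ (j + 1) := by
          have : (0:ℝ) ≤ (j.factorial : ℝ) * 2 ^ j := by positivity
          linarith
end

section
/- Let m, z ∈ ℂ and x ∈ ℝ² \ {0}. The matrix-valued function φ_z(x) = (i√(m²-z²)/(2π)) K_1(√(m²-z²)|x|) (σ·x/|x|) + (1/(2π)) K_0(√(m²-z²)|x|)(m σ_3 + z σ_0) satisfies the symmetry φ_{z̄}(x-y)* = φ_z(y-x) for all x ≠ y, where * denotes the conjugate transpose, provided m ∈ ℝ. -/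
open Matrix Real

noncomputable def sigma1 : Matrix (Fin 2) (Fin 2) ℂ := !![0, 1; 1, 0]
noncomputable def sigma2 : Matrix (Fin 2) (Fin 2) ℂ := !![0, -Complex.I; Complex.I, 0]
noncomputable def sigma3 : Matrix (Fin 2) (Fin 2) ℂ := !![1, 0; 0, -1]

/-- Modified Bessel function of the second kind of order `ν` for complex argument,
via the integral representation `K_ν(z) = ∫₀^∞ exp(-z cosh s) cosh(ν s) ds`. -/
noncomputable def besselK (ν : ℕ) (z : ℂ) : ℂ :=
  ∫ s in Set.Ioi (0 : ℝ), Complex.exp (-z * Real.cosh s) * (Real.cosh (ν * s) : ℂ)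

/-- The Euclidean norm on `ℝ × ℝ`. -/
noncomputable def nrm (x : ℝ × ℝ) : ℝ := Real.sqrt (x.1 ^ 2 + x.2 ^ 2)

/-- The Green function `φ_z` of the free two-dimensional Dirac operator. -/
noncomputable def phiGreen (m : ℝ) (z : ℂ) (x : ℝ × ℝ) : Matrix (Fin 2) (Fin 2) ℂ :=
  letI s : ℂ := ((m : ℂ) ^ 2 - z ^ 2) ^ ((1 : ℂ) / 2)
  (Complex.I * s / (2 * (π : ℂ)) * besselK 1 (s * (nrm x : ℂ))) •
      (((x.1 / nrm x : ℝ) : ℂ) • sigma1 + ((x.2 / nrm x : ℝ) : ℂ) • sigma2) +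
    ((1 : ℂ) / (2 * (π : ℂ)) * besselK 0 (s * (nrm x : ℂ))) •
      ((m : ℂ) • sigma3 + z • (1 : Matrix (Fin 2) (Fin 2) ℂ))

lemma besselK_conj (ν : ℕ) (w : ℂ) :
    besselK ν ((starRingEnd ℂ) w) = (starRingEnd ℂ) (besselK ν w) := by
  unfold besselK
  rw [← integral_conj]
  congr 1
  funext s
  have h1 : -(starRingEnd ℂ) w * (Real.cosh s : ℂ) =
      (starRingEnd ℂ) (-w * (Real.cosh s : ℂ)) := by
    rw [_root_.map_mul, map_neg, Complex.conj_ofReal]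
  rw [h1, Complex.exp_conj, _root_.map_mul, Complex.conj_ofReal]

lemma sigma1_ct : sigma1ᴴ = sigma1 := by
  ext i j; fin_cases i <;> fin_cases j <;> simp [sigma1]
lemma sigma2_ct : sigma2ᴴ = sigma2 := by
  ext i j; fin_cases i <;> fin_cases j <;> simp [sigma2]
lemma sigma3_ct : sigma3ᴴ = sigma3 := by
  ext i j; fin_cases i <;> fin_cases j <;> simp [sigma3]

lemma nrm_neg (v : ℝ × ℝ) : nrm (-v) = nrm v := by
  simp [nrm]

theorem phiGreen_symmetry (m : ℝ) (z : ℂ)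
    (hz : ∀ r : ℝ, r ≤ 0 → (m : ℂ) ^ 2 - z ^ 2 ≠ (r : ℂ)) :
    ∀ x y : ℝ × ℝ, x ≠ y →
      (phiGreen m ((starRingEnd ℂ) z) (x - y)).conjTranspose =
        phiGreen m z (y - x) := by
  intro x y hxy
  have hw : ((m : ℂ) ^ 2 - z ^ 2).arg ≠ π := by
    intro h
    rw [Complex.arg_eq_pi_iff] at h
    exact hz ((m : ℂ) ^ 2 - z ^ 2).re (le_of_lt h.1)
      (by rw [Complex.ext_iff]; simp [h.2])
  have hs : ((m : ℂ) ^ 2 - ((starRingEnd ℂ) z) ^ 2) ^ ((1 : ℂ) / 2) =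
      (starRingEnd ℂ) (((m : ℂ) ^ 2 - z ^ 2) ^ ((1 : ℂ) / 2)) := by
    have h1 : (m : ℂ) ^ 2 - ((starRingEnd ℂ) z) ^ 2 =
        (starRingEnd ℂ) ((m : ℂ) ^ 2 - z ^ 2) := by
      simp [Complex.conj_ofReal]
    rw [h1, Complex.conj_cpow _ _ hw]
    congr 2
    simp [map_ofNat]
  rw [show x - y = -(y - x) by abel]
  set v := y - x
  simp only [phiGreen, hs, nrm_neg]
  set s : ℂ := ((m : ℂ) ^ 2 - z ^ 2) ^ ((1 : ℂ) / 2) with hsdef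
  have hK1 : besselK 1 ((starRingEnd ℂ) s * (nrm v : ℂ)) =
      (starRingEnd ℂ) (besselK 1 (s * (nrm v : ℂ))) := by
    rw [← besselK_conj]; congr 1; simp [Complex.conj_ofReal]
  have hK0 : besselK 0 ((starRingEnd ℂ) s * (nrm v : ℂ)) =
      (starRingEnd ℂ) (besselK 0 (s * (nrm v : ℂ))) := by
    rw [← besselK_conj]; congr 1; simp [Complex.conj_ofReal]
  rw [hK1, hK0]
  rw [Matrix.conjTranspose_add, Matrix.conjTranspose_smul, Matrix.conjTranspose_smul,
    Matrix.conjTranspose_add, Matrix.conjTranspose_add, Matrix.conjTranspose_smul,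
    Matrix.conjTranspose_smul, Matrix.conjTranspose_smul, Matrix.conjTranspose_smul,
    Matrix.conjTranspose_one, sigma1_ct, sigma2_ct, sigma3_ct]
  have hneg1 : ((-v).1 / nrm v : ℝ) = -(v.1 / nrm v) := by
    simp [neg_div]
  have hneg2 : ((-v).2 / nrm v : ℝ) = -(v.2 / nrm v) := by
    simp [neg_div]
  rw [hneg1, hneg2]
  simp only [Complex.star_def, _root_.map_mul, map_div₀, Complex.conj_I, Complex.conj_conj, Complex.conj_ofReal,
    _root_.map_one, map_ofNat, map_neg, Complex.ofReal_neg]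
  module
end
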